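/- Let b, k be natural numbers with 1 < k ≤ b and 2k ≠ b, and let s ∈ ℂ with s ≠ 0. For f = x²·y^b + x + s·x·y^k ∈ ℂ[x,y] (the family of the paper's Example 8.8), the total Milnor number of f equals 2k, i.e. dim_ℂ ℂ[x,y]/(2x·y^b + 1 + s·y^k, b·x²·y^{b−1} + k·s·x·y^{k−1}) = 2k. -/

import Mathlib

open MvPolynomial

noncomputable section

/-- The polynomial f = x²·y^b + x + s·x·y^k of Example 8.8
    (variables: X 0 = x, X 1 = y). -/
def f₈₈ (b k : ℕ) (s : ℂ) : MvPolynomial (Fin 2) ℂ :=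
  X 0 ^ 2 * X 1 ^ b + X 0 + C s * (X 0 * X 1 ^ k)

namespace Ex88
def al (b k : ℕ) (s : ℂ) : ℂ := ((2*k:ℂ) - b) * s
def ga (b k : ℕ) (s : ℂ) : ℂ := (al b k s)^b / (2 * (b:ℂ)^b)
def up (b k : ℕ) (s : ℂ) : Polynomial ℂ :=
  Polynomial.C (al b k s) * Polynomial.X^k - Polynomial.C (b:ℂ)
def vp (k : ℕ) (s : ℂ) : Polynomial ℂ := 1 + Polynomial.C s * Polynomial.X^k
def cp (b k : ℕ) (s : ℂ) : Polynomial ℂ :=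
  Polynomial.C (ga b k s) * Polynomial.X^(k*b - b)
def qp (b k : ℕ) (s : ℂ) : Polynomial ℂ := -(cp b k s * vp k s)
def pp (b k : ℕ) (s : ℂ) : Polynomial ℂ := up b k s * vp k s
def wp (b k : ℕ) (s : ℂ) : Polynomial ℂ :=
  cp b k s * Polynomial.X^(k-1) *
    (Polynomial.C ((k:ℂ)*s) - Polynomial.C (b:ℂ) * cp b k s * vp k s * Polynomial.X^(b-k))

variable {b k : ℕ} {s : ℂ}

lemma al_ne (hk : 1 < k) (h2k : 2*k ≠ b) (hs : s ≠ 0) : al b k s ≠ 0 := by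
  apply mul_ne_zero _ hs
  rw [sub_ne_zero]
  intro h
  apply h2k
  exact_mod_cast (by push_cast at h ⊢; exact h : ((2*k:ℕ):ℂ) = (b:ℕ))

lemma hw1 (hk : 1 < k) (hkb : k ≤ b) :
    (Polynomial.X : Polynomial ℂ)^(b+1) * wp b k s
      = Polynomial.C ((k:ℂ)*s*(ga b k s)) * ((Polynomial.X:Polynomial ℂ)^k)^(b+1)
        - Polynomial.C ((b:ℂ)*(ga b k s)^2) * ((Polynomial.X:Polynomial ℂ)^k)^(2*b)
        - Polynomial.C ((b:ℂ)*(ga b k s)^2*s) * ((Polynomial.X:Polynomial ℂ)^k)^(2*b+1) := by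
  obtain ⟨k1, rfl⟩ : ∃ m, k = m + 1 := ⟨k-1, by omega⟩
  obtain ⟨bk, rfl⟩ : ∃ m, b = m + (k1+1) := ⟨b - (k1+1), by omega⟩
  unfold wp cp vp
  have h1 : (k1+1) * (bk + (k1+1)) - (bk + (k1+1)) = k1 * (bk + (k1+1)) := by
    rw [Nat.succ_mul, Nat.add_sub_cancel]
  have h2 : (k1+1) - 1 = k1 := by omega
  have h3 : (bk + (k1+1)) - (k1+1) = bk := by omega
  rw [h1, h2, h3]
  push_cast
  simp only [Polynomial.C_add, Polynomial.C_mul, Polynomial.C_pow, Polynomial.C_1]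
  ring


lemma u_dvd_w (hk : 1 < k) (hkb : k ≤ b) (h2k : 2*k ≠ b) (hs : s ≠ 0) :
    up b k s ∣ wp b k s := by
  have hα : al b k s ≠ 0 := al_ne hk h2k hs
  have hb0 : (b:ℂ) ≠ 0 := Nat.cast_ne_zero.2 (by omega)
  rw [← AdjoinRoot.mk_eq_zero]
  set A := AdjoinRoot (up b k s)
  set t : A := AdjoinRoot.root (up b k s) with ht
  set φ := AdjoinRoot.of (up b k s) with hφ
  have htk : φ (al b k s) * t^k = φ ((b:ℂ)) := by
    have h0 := AdjoinRoot.mk_self (f := up b k s)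
    rw [up] at h0
    simp [map_sub, map_mul, map_pow, AdjoinRoot.mk_X, AdjoinRoot.mk_C, sub_eq_zero] at h0
    exact h0
  have hβ : t^k = φ ((b:ℂ)/(al b k s)) := by
    have : φ ((al b k s)⁻¹) * (φ (al b k s) * t^k) = φ ((al b k s)⁻¹) * φ ((b:ℂ)) := by
      rw [htk]
    rw [← mul_assoc, ← map_mul, inv_mul_cancel₀ hα, map_one, one_mul, ← map_mul] at this
    rw [this, div_eq_inv_mul]
  have hunit : IsUnit t := by
    refine IsUnit.of_mul_eq_one (φ ((al b k s)/(b:ℂ)) * t^(k-1)) ?_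
    have hk1 : t * t^(k-1) = t^k := by
      rw [← pow_succ']
      congr 1
      omega
    calc t * (φ ((al b k s)/(b:ℂ)) * t^(k-1)) = φ ((al b k s)/(b:ℂ)) * (t * t^(k-1)) := by ring
      _ = φ ((al b k s)/(b:ℂ)) * φ ((b:ℂ)/(al b k s)) := by rw [hk1, hβ]
      _ = 1 := by rw [← map_mul, div_mul_div_comm, mul_comm, div_self (by exact mul_ne_zero hb0 hα), map_one]
  have key : t^(b+1) * AdjoinRoot.mk (up b k s) (wp b k s) = 0 := by
    have h1 : AdjoinRoot.mk (up b k s) ((Polynomial.X)^(b+1) * wp b k s)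
        = t^(b+1) * AdjoinRoot.mk (up b k s) (wp b k s) := by
      rw [map_mul, map_pow, AdjoinRoot.mk_X]
    rw [← h1, hw1 hk hkb]
    simp only [map_sub, map_mul, map_pow, AdjoinRoot.mk_X, AdjoinRoot.mk_C]
    rw [← hφ, ← ht, hβ]
    simp only [← map_pow φ, ← map_mul φ, ← map_sub φ]
    rw [← map_zero φ]
    congr 1
    have hbb : ((b:ℂ))^b ≠ 0 := pow_ne_zero _ hb0
    simp only [ga, div_pow]
    field_simp
    simp only [al]
    ring
  exact (hunit.pow (b+1)).mul_right_eq_zero.mp key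


lemma bez (hk : 1 < k) (hkb : k ≤ b) :
    ∃ a : Polynomial ℂ, a * up b k s + 2 * cp b k s * Polynomial.X^b = 1 := by
  have hb0 : (b:ℂ) ≠ 0 := Nat.cast_ne_zero.2 (by omega)
  have hbb : ((b:ℂ))^b ≠ 0 := pow_ne_zero _ hb0
  have hd : (k*b - b) + b = k*b := Nat.sub_add_cancel (Nat.le_mul_of_pos_left b (by omega))
  obtain ⟨e, he⟩ := sub_dvd_pow_sub_pow (Polynomial.C (al b k s) * Polynomial.X^k)
    (Polynomial.C ((b:ℂ))) b
  refine ⟨-(Polynomial.C (((b:ℂ)^b)⁻¹)) * e, ?_⟩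
  have hX : 2 * cp b k s * (Polynomial.X : Polynomial ℂ)^b
      = 2 * Polynomial.C (ga b k s) * ((Polynomial.X : Polynomial ℂ)^k)^b := by
    unfold cp
    rw [mul_assoc, mul_assoc, ← pow_add, hd, pow_mul, mul_assoc]
  rw [hX]
  have hγ : 2 * Polynomial.C (ga b k s)
      = Polynomial.C (al b k s)^b * Polynomial.C (((b:ℂ)^b)⁻¹) := by
    rw [← Polynomial.C_pow, ← Polynomial.C_mul]
    rw [show (2 : Polynomial ℂ) = Polynomial.C 2 from (map_ofNat Polynomial.C 2).symm, ← Polynomial.C_mul]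
    congr 1
    rw [ga]
    field_simp
  have hc : Polynomial.C ((b:ℂ))^b * Polynomial.C (((b:ℂ)^b)⁻¹) = 1 := by
    rw [← Polynomial.C_pow, ← Polynomial.C_mul, mul_inv_cancel₀ hbb, Polynomial.C_1]
  unfold up at he ⊢
  linear_combination (Polynomial.C (((b:ℂ)^b)⁻¹)) * he + ((Polynomial.X:Polynomial ℂ)^k)^b * hγ + hc


lemma p_dvd_r1 (hk : 1 < k) (hkb : k ≤ b) :
    pp b k s ∣ 2 * qp b k s * Polynomial.X^b + 1 + Polynomial.C s * Polynomial.X^k := by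
  obtain ⟨a, ha⟩ := bez (s := s) hk hkb
  refine ⟨a, ?_⟩
  unfold qp pp vp
  linear_combination (-(1 + Polynomial.C s * Polynomial.X^k)) * ha

lemma p_dvd_r2 (hk : 1 < k) (hkb : k ≤ b) (h2k : 2*k ≠ b) (hs : s ≠ 0) :
    pp b k s ∣ Polynomial.C (b:ℂ) * qp b k s^2 * Polynomial.X^(b-1)
      + Polynomial.C ((k:ℂ)*s) * qp b k s * Polynomial.X^(k-1) := by
  obtain ⟨e, hew⟩ := u_dvd_w hk hkb h2k hs
  refine ⟨-e, ?_⟩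
  have hbk : (k-1) + (b-k) = b-1 := by omega
  have h2 : Polynomial.C (b:ℂ) * qp b k s^2 * Polynomial.X^(b-1)
      + Polynomial.C ((k:ℂ)*s) * qp b k s * Polynomial.X^(k-1)
      = -(vp k s * wp b k s) := by
    rw [← hbk]
    unfold qp wp vp
    ring
  rw [h2, hew]
  unfold pp vp
  ring

lemma pp_facts (hk : 1 < k) (hkb : k ≤ b) (h2k : 2*k ≠ b) (hs : s ≠ 0) :
    pp b k s ≠ 0 ∧ (pp b k s).natDegree = 2*k := by
  have hα : al b k s ≠ 0 := al_ne hk h2k hs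
  have h1 : (Polynomial.C (al b k s) * Polynomial.X^k).natDegree = k :=
    Polynomial.natDegree_C_mul_X_pow _ _ hα
  have hu : (up b k s).natDegree = k := by
    unfold up
    rw [Polynomial.natDegree_sub_eq_left_of_natDegree_lt
      (by rw [Polynomial.natDegree_C, h1]; omega), h1]
  have hune : up b k s ≠ 0 := fun h => by simp [h] at hu; omega
  have h2 : (Polynomial.C s * Polynomial.X^k).natDegree = k :=
    Polynomial.natDegree_C_mul_X_pow _ _ hs
  have hv : (vp k s).natDegree = k := by
    unfold vp
    rw [Polynomial.natDegree_add_eq_right_of_natDegree_lt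
      (by rw [Polynomial.natDegree_one, h2]; omega), h2]
  have hvne : vp k s ≠ 0 := fun h => by simp [h] at hv; omega
  refine ⟨mul_ne_zero hune hvne, ?_⟩
  unfold pp
  rw [Polynomial.natDegree_mul hune hvne, hu, hv]
  ring


end Ex88

open Ex88

/-- for natural numbers 1 < k ≤ b with 2k ≠ b and s ≠ 0, the total Milnor
    number of f = x²y^b + x + sxy^k equals 2k, i.e.
    dim_ℂ ℂ[x,y]/(∂f/∂x, ∂f/∂y) = 2k. -/
theorem total_milnor_number_example88 (b k : ℕ) (hk : 1 < k) (hkb : k ≤ b)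
    (h2k : 2 * k ≠ b) (s : ℂ) (hs : s ≠ 0) :
    Module.finrank ℂ
      (MvPolynomial (Fin 2) ℂ ⧸
        Ideal.span {pderiv 0 (f₈₈ b k s), pderiv 1 (f₈₈ b k s)}) = 2 * k := by
  have hg1 : pderiv 0 (f₈₈ b k s) = 2 * X 0 * X 1 ^ b + 1 + C s * X 1 ^ k := by
    simp [f₈₈, pderiv_mul, pderiv_pow, pderiv_X]; ring
  have hg2 : pderiv 1 (f₈₈ b k s)
      = C (b:ℂ) * X 0 ^ 2 * X 1 ^ (b-1) + C ((k:ℂ)*s) * X 0 * X 1 ^ (k-1) := by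
    simp [f₈₈, pderiv_mul, pderiv_pow, pderiv_X]; ring
  set g₁ := pderiv 0 (f₈₈ b k s) with hG1
  set g₂ := pderiv 1 (f₈₈ b k s) with hG2
  set J : Ideal (MvPolynomial (Fin 2) ℂ) := Ideal.span {g₁, g₂} with hJ
  set σ : Polynomial ℂ →ₐ[ℂ] MvPolynomial (Fin 2) ℂ :=
    Polynomial.aeval (X 1 : MvPolynomial (Fin 2) ℂ) with hσ
  have hσu : σ (up b k s) = C (al b k s) * (X 1)^k - C (b:ℂ) := by
    simp [hσ, up, MvPolynomial.algebraMap_eq]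
  have hσv : σ (vp k s) = 1 + C s * (X 1)^k := by
    simp [hσ, vp, MvPolynomial.algebraMap_eq]
  have hCal : (C (al b k s) : MvPolynomial (Fin 2) ℂ) = 2 * C ((k:ℂ)*s) - C (b:ℂ) * C s := by
    rw [al]
    simp only [map_mul, map_sub, map_ofNat]
    ring
  have hXb : (X 1 : MvPolynomial (Fin 2) ℂ)^b = (X 1)^(b-1) * X 1 := by
    rw [← pow_succ]; congr 1; omega
  have hXk : (X 1 : MvPolynomial (Fin 2) ℂ)^k = (X 1)^(k-1) * X 1 := by
    rw [← pow_succ]; congr 1; omega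
  have hI5 : -(C (b:ℂ) * X 0) * g₁ + (2 * X 1) * g₂ = X 0 * σ (up b k s) := by
    rw [hg1, hg2, hσu, hXb, hXk]
    linear_combination (-(X 0 * ((X 1)^(k-1) * X 1))) * hCal
  have hpJ : σ (pp b k s) ∈ J := by
    rw [hJ]
    refine Ideal.mem_span_pair.2
      ⟨σ (up b k s) + 2 * C (b:ℂ) * X 0 * (X 1^(b-1) * X 1), -(4 * (X 1^(b-1) * X 1 * X 1)), ?_⟩
    rw [pp, map_mul σ (up b k s) (vp k s), hg1, hg2, hσu, hσv, hXb, hXk]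
    linear_combination (2 * X 0 * (((X 1)^(b-1) * X 1) * ((X 1)^(k-1) * X 1))) * hCal
  obtain ⟨a, ha⟩ := bez (s := s) hk hkb
  have hBz : σ a * σ (up b k s) + 2 * σ (cp b k s) * (X 1)^b = 1 := by
    have h0 := congrArg σ ha
    simpa only [map_add, map_mul, map_pow, map_one, map_ofNat, Polynomial.aeval_X, hσ]
      using h0
  have hxq : X 0 + σ (cp b k s * vp k s) ∈ J := by
    rw [hJ]
    refine Ideal.mem_span_pair.2
      ⟨σ (cp b k s) - σ a * C (b:ℂ) * X 0, 2 * σ a * X 1, ?_⟩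
    rw [map_mul, hσv, hg1, hg2]
    rw [hσu] at hBz
    rw [hXb, hXk] at hBz ⊢
    linear_combination (X 0) * hBz + (-(σ a * X 0 * ((X 1)^(k-1) * X 1))) * hCal
  -- the quotient ring
  set W : Fin 2 → (AdjoinRoot (pp b k s)) := ![AdjoinRoot.mk _ (qp b k s), AdjoinRoot.root _] with hW
  set Φ : MvPolynomial (Fin 2) ℂ →ₐ[ℂ] (AdjoinRoot (pp b k s)) := MvPolynomial.aeval W with hΦ
  have hΦ1 : Φ g₁ = 0 := by
    rw [hg1]
    have : Φ (2 * X 0 * X 1 ^ b + 1 + C s * X 1 ^ k)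
        = AdjoinRoot.mk (pp b k s)
            (2 * qp b k s * Polynomial.X^b + 1 + Polynomial.C s * Polynomial.X^k) := by
      simp [hΦ, hW, map_add, map_mul, map_pow, map_ofNat, AdjoinRoot.mk_X, AdjoinRoot.mk_C,
        AdjoinRoot.algebraMap_eq]
    rw [this, AdjoinRoot.mk_eq_zero]
    exact p_dvd_r1 hk hkb
  have hΦ2 : Φ g₂ = 0 := by
    rw [hg2]
    have : Φ (C (b:ℂ) * X 0 ^ 2 * X 1 ^ (b-1) + C ((k:ℂ)*s) * X 0 * X 1 ^ (k-1))
        = AdjoinRoot.mk (pp b k s)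
            (Polynomial.C (b:ℂ) * qp b k s^2 * Polynomial.X^(b-1)
              + Polynomial.C ((k:ℂ)*s) * qp b k s * Polynomial.X^(k-1)) := by
      simp [hΦ, hW, map_add, map_mul, map_pow, map_ofNat, AdjoinRoot.mk_X, AdjoinRoot.mk_C,
        AdjoinRoot.algebraMap_eq]
    rw [this, AdjoinRoot.mk_eq_zero]
    exact p_dvd_r2 hk hkb h2k hs
  have hker : ∀ x ∈ J, Φ x = 0 := by
    have hle : J ≤ RingHom.ker Φ.toRingHom := by
      rw [hJ, Ideal.span_le]
      rintro y hy
      simp only [Set.mem_insert_iff, Set.mem_singleton_iff] at hy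
      rcases hy with rfl | rfl
      · exact hΦ1
      · exact hΦ2
    exact fun x hx => hle hx
  set Φb : (MvPolynomial (Fin 2) ℂ ⧸ J) →ₐ[ℂ] (AdjoinRoot (pp b k s)) := Ideal.Quotient.liftₐ J Φ hker with hΦb
  have hav : (Polynomial.aeval ((Ideal.Quotient.mkₐ ℂ J) (X 1))) (pp b k s) = 0 := by
    rw [Polynomial.aeval_algHom_apply]
    have : (Polynomial.aeval (X 1 : MvPolynomial (Fin 2) ℂ)) (pp b k s) = σ (pp b k s) := rfl
    rw [this]
    rw [Ideal.Quotient.mkₐ_eq_mk]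
    exact Ideal.Quotient.eq_zero_iff_mem.2 hpJ
  set Ψb : (AdjoinRoot (pp b k s)) →ₐ[ℂ] (MvPolynomial (Fin 2) ℂ ⧸ J) :=
    AdjoinRoot.liftAlgHom (pp b k s) (Algebra.ofId ℂ _) ((Ideal.Quotient.mkₐ ℂ J) (X 1)) (by rw [← hav]; rfl) with hΨb
  have h1 : Φb.comp Ψb = AlgHom.id ℂ (AdjoinRoot (pp b k s)) := by
    apply AdjoinRoot.algHom_ext
    simp [hΦb, hΨb, AdjoinRoot.liftAlgHom_root, Ideal.Quotient.liftₐ_apply,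
      Ideal.Quotient.mkₐ_eq_mk, Ideal.Quotient.lift_mk, hΦ, hW]
    exact (Ideal.Quotient.lift_mk _ _ _).trans (by simp)
  have h2 : Ψb.comp Φb = AlgHom.id ℂ (MvPolynomial (Fin 2) ℂ ⧸ J) := by
    apply Ideal.Quotient.algHom_ext
    apply MvPolynomial.algHom_ext
    intro i
    fin_cases i
    · show Ψb (Φb (Ideal.Quotient.mkₐ ℂ J (X 0))) = Ideal.Quotient.mkₐ ℂ J (X 0)
      have e1 : Φb (Ideal.Quotient.mkₐ ℂ J (X 0)) = AdjoinRoot.mk (pp b k s) (qp b k s) := by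
        simp [hΦb, Ideal.Quotient.mkₐ_eq_mk, Ideal.Quotient.liftₐ_apply,
          Ideal.Quotient.lift_mk, hΦ, hW]
        erw [Ideal.Quotient.lift_mk]
        simp
      rw [e1, hΨb, AdjoinRoot.liftAlgHom_mk]
      change (Polynomial.aeval ((Ideal.Quotient.mkₐ ℂ J) (X 1))) (qp b k s) = _
      have e2 : (Polynomial.aeval ((Ideal.Quotient.mkₐ ℂ J) (X 1))) (qp b k s)
          = (Ideal.Quotient.mkₐ ℂ J) (σ (qp b k s)) := by
        rw [Polynomial.aeval_algHom_apply]
      rw [e2]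
      simp only [Ideal.Quotient.mkₐ_eq_mk]
      rw [Ideal.Quotient.eq]
      have : σ (qp b k s) - X 0 = -(X 0 + σ (cp b k s * vp k s)) := by
        rw [qp, map_neg]; ring
      rw [this]
      exact neg_mem hxq
    · show Ψb (Φb (Ideal.Quotient.mkₐ ℂ J (X 1))) = Ideal.Quotient.mkₐ ℂ J (X 1)
      have e1 : Φb (Ideal.Quotient.mkₐ ℂ J (X 1)) = AdjoinRoot.root (pp b k s) := by
        simp [hΦb, Ideal.Quotient.mkₐ_eq_mk, Ideal.Quotient.liftₐ_apply,
          Ideal.Quotient.lift_mk, hΦ, hW]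
        erw [Ideal.Quotient.lift_mk]
        simp
      rw [e1, hΨb, AdjoinRoot.liftAlgHom_root]
  have equiv : (MvPolynomial (Fin 2) ℂ ⧸ J) ≃ₐ[ℂ] (AdjoinRoot (pp b k s)) := AlgEquiv.ofAlgHom Φb Ψb h1 h2
  obtain ⟨hne, hdeg⟩ := pp_facts (s := s) hk hkb h2k hs
  rw [equiv.toLinearEquiv.finrank_eq]
  rw [(AdjoinRoot.powerBasis hne).finrank]
  show (pp b k s).natDegree = 2*k
  exact hdeg
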